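/- If e^{2i(J+J')} = (sin η − sin λ)/sin(η+λ) and e^{2i(J−J')} = (sin η − sin λ)/sin(η−λ), then the two-site gate U = exp(−iJ(σˣ⊗σˣ + σʸ⊗σʸ) − iJ'(σᶻ⊗σᶻ − I)) equals the matrix Ř(λ) with rows (1,0,0,0), (0, sinη/sin(λ+η), sinλ/sin(λ+η), 0), (0, sinλ/sin(λ+η), sinη/sin(λ+η), 0), (0,0,0,1). -/

import Mathlib

open Matrix Complex Kronecker

def σx : Matrix (Fin 2) (Fin 2) ℂ := !![0, 1; 1, 0]
noncomputable def σy : Matrix (Fin 2) (Fin 2) ℂ := !![0, -Complex.I; Complex.I, 0]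
def σz : Matrix (Fin 2) (Fin 2) ℂ := !![1, 0; 0, -1]

/-- The braid-form `R`-matrix `Ř(λ)` on `ℂ² ⊗ ℂ²`. -/
noncomputable def Rbm (η lam : ℂ) : Matrix (Fin 2 × Fin 2) (Fin 2 × Fin 2) ℂ :=
  fun p q =>
    if p = q then
      (if p.1 = p.2 then 1 else Complex.sin η / Complex.sin (lam + η))
    else if p.1 = q.2 ∧ p.2 = q.1 then Complex.sin lam / Complex.sin (lam + η)
    else 0

/-- Eigenvector matrix for the middle block. -/
def Vmat : Matrix (Fin 2 × Fin 2) (Fin 2 × Fin 2) ℂ :=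
  fun p q =>
    if p = (0,0) then (if q = (0,0) then 1 else 0)
    else if p = (1,1) then (if q = (1,1) then 1 else 0)
    else if p = (0,1) then (if q = (0,1) then 1 else if q = (1,0) then 1 else 0)
    else (if q = (0,1) then 1 else if q = (1,0) then -1 else 0)

/-- Inverse of `Vmat`. -/
noncomputable def Wmat : Matrix (Fin 2 × Fin 2) (Fin 2 × Fin 2) ℂ :=
  fun p q =>
    if p = (0,0) then (if q = (0,0) then 1 else 0)
    else if p = (1,1) then (if q = (1,1) then 1 else 0)
    else if p = (0,1) then (if q = (0,1) then 1/2 else if q = (1,0) then 1/2 else 0)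
    else (if q = (0,1) then 1/2 else if q = (1,0) then -(1/2) else 0)

lemma VW : Vmat * Wmat = 1 := by
  ext ⟨i, j⟩ ⟨k, l⟩
  fin_cases i <;> fin_cases j <;> fin_cases k <;> fin_cases l <;>
    simp [Matrix.mul_apply, Fintype.sum_prod_type, Fin.sum_univ_two, Vmat, Wmat,
      Matrix.one_apply, Prod.ext_iff] <;> norm_num

lemma sin_mul_sin (η lam : ℂ) :
    Complex.sin (η + lam) * Complex.sin (η - lam)
      = Complex.sin η ^ 2 - Complex.sin lam ^ 2 := by
  rw [Complex.sin_add, Complex.sin_sub]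
  linear_combination (Complex.sin η ^ 2) * (Complex.sin_sq_add_cos_sq lam)
    - (Complex.sin lam ^ 2) * (Complex.sin_sq_add_cos_sq η)

set_option maxHeartbeats 1000000 in
theorem gate_eq_braid (J J' η lam : ℂ)
    (hs : Complex.sin (lam + η) ≠ 0)
    (h1 : Complex.exp (2 * Complex.I * (J + J'))
        = (Complex.sin η - Complex.sin lam) / Complex.sin (η + lam))
    (h2 : Complex.exp (2 * Complex.I * (J - J'))
        = (Complex.sin η - Complex.sin lam) / Complex.sin (η - lam)) :
    NormedSpace.exp
      ((-Complex.I * J) • (σx ⊗ₖ σx + σy ⊗ₖ σy)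
        + (-Complex.I * J') • (σz ⊗ₖ σz - (1 : Matrix (Fin 2 × Fin 2) (Fin 2 × Fin 2) ℂ)))
      = Rbm η lam := by
  have hp : Complex.sin (η + lam) ≠ 0 := by rwa [add_comm] at hs
  have hab : Complex.sin η - Complex.sin lam ≠ 0 := by
    intro h
    exact Complex.exp_ne_zero _ (h1.trans (by rw [h, zero_div]))
  have hm : Complex.sin (η - lam) ≠ 0 := by
    intro h
    exact Complex.exp_ne_zero _ (h2.trans (by rw [h, div_zero]))
  set v : Fin 2 × Fin 2 → ℂ := fun p =>
    if p = (0,1) then -(2 * Complex.I * (J - J'))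
    else if p = (1,0) then 2 * Complex.I * (J + J') else 0 with hv
  have hVunit : IsUnit Vmat :=
    (Matrix.isUnit_iff_isUnit_det _).2 (Matrix.isUnit_det_of_right_inverse VW)
  have hWinv : Vmat⁻¹ = Wmat := Matrix.inv_eq_right_inv VW
  have hA : ((-Complex.I * J) • (σx ⊗ₖ σx + σy ⊗ₖ σy)
        + (-Complex.I * J') • (σz ⊗ₖ σz - (1 : Matrix (Fin 2 × Fin 2) (Fin 2 × Fin 2) ℂ)))
      = Vmat * Matrix.diagonal v * Vmat⁻¹ := by
    rw [hWinv]
    ext ⟨i, j⟩ ⟨k, l⟩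
    fin_cases i <;> fin_cases j <;> fin_cases k <;> fin_cases l <;>
      · simp [Matrix.mul_apply, Fintype.sum_prod_type, Fin.sum_univ_two, Vmat, Wmat, hv,
          Matrix.diagonal, σx, σy, σz, Matrix.one_apply, Prod.ext_iff]
        try ring
  rw [hA, Matrix.exp_conj Vmat _ hVunit, Matrix.exp_diagonal, hWinv]
  have e1 : NormedSpace.exp (-(2 * Complex.I * (J - J')))
      = Complex.sin (η - lam) / (Complex.sin η - Complex.sin lam) := by
    rw [← Complex.exp_eq_exp_ℂ, Complex.exp_neg, h2, inv_div]
  have e2 : NormedSpace.exp (2 * Complex.I * (J + J'))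
      = (Complex.sin η - Complex.sin lam) / Complex.sin (η + lam) := by
    rw [← Complex.exp_eq_exp_ℂ]; exact h1
  have key := sin_mul_sin η lam
  rw [Pi.exp_def]
  ext ⟨i, j⟩ ⟨k, l⟩
  fin_cases i <;> fin_cases j <;> fin_cases k <;> fin_cases l <;>
    · simp only [Matrix.mul_apply, Fintype.sum_prod_type, Fin.sum_univ_two, Vmat, Wmat, hv,
        Matrix.diagonal, Rbm, NormedSpace.exp_zero, e1, e2, Prod.ext_iff, Matrix.of_apply]
      norm_num [add_comm lam η]
      try
        rw [e1, e2]
        field_simp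
        linear_combination key
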